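/- Existence of an optimal static strategy (Corollary 1, fixed-point form): there exists a selection σ assigning to each q : T an action σ q ∈ A q such that the affine operator F_σ defined by (F_σ x) q = c q (σ q) + ∑_{q' : T} M q (σ q) q' * x q' satisfies F_σ x* = x* and ⨆ k, (F_σ^[k] 0) q = x* q for every q; i.e. the least fixed point of F_σ coincides with the least fixed point x* of F. -/

import Mathlib

open scoped ENNReal

private lemma inf'_iSup_le_iSup_inf' {α : Type*} (s : Finset α) (hs : s.Nonempty)
    (g : α → ℕ → ℝ≥0∞) (hg : ∀ a, Monotone (g a)) :
    s.inf' hs (fun a => ⨆ k, g a k) ≤ ⨆ k, s.inf' hs (fun a => g a k) := by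
  choose sel hsel hmin using fun k => s.exists_mem_eq_inf' hs (fun a => g a k)
  have : Finite {a // a ∈ s} := inferInstance
  obtain ⟨a, ha⟩ := Finite.exists_infinite_fiber (fun k => (⟨sel k, hsel k⟩ : {a // a ∈ s}))
  replace ha := Set.infinite_coe_iff.mp ha
  refine le_trans (Finset.inf'_le _ a.2) (iSup_le fun k => ?_)
  obtain ⟨m, hm, hkm⟩ := ha.exists_gt k
  have hma : sel m = (a : α) := congrArg Subtype.val hm
  calc g (a : α) k ≤ g (a : α) m := hg _ hkm.le
    _ = s.inf' hs (fun b => g b m) := by rw [← hma, ← hmin]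
    _ ≤ ⨆ n, s.inf' hs (fun b => g b n) := le_iSup (fun n => s.inf' hs fun b => g b n) m

/-- Corollary 1 (fixed-point form): there exists an optimal static strategy
`σ`, i.e. a selection of an action `σ q ∈ A q` for each type `q`, such that the
affine operator `F_σ` has the least fixed point `x*` of `F` as a fixed point,
and the least fixed point of `F_σ` coincides with `x*`. -/
theorem exists_optimal_static_strategy {T Act : Type*} [Fintype T] [Nonempty T]
    (A : T → Finset Act) (hA : ∀ q, (A q).Nonempty)
    (c : T → Act → ℝ≥0∞) (hc : ∀ q, ∀ a ∈ A q, 0 < c q a ∧ c q a < ∞)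
    (M : T → Act → T → ℝ≥0∞) (hM : ∀ q, ∀ a ∈ A q, ∀ q', M q a q' < ∞)
    (F : (T → ℝ≥0∞) → (T → ℝ≥0∞))
    (hF : ∀ x q, F x q = (A q).inf' (hA q) (fun a => c q a + ∑ q', M q a q' * x q')) :
    ∃ σ : T → Act, (∀ q, σ q ∈ A q) ∧
      ∀ Fσ : (T → ℝ≥0∞) → (T → ℝ≥0∞),
        (∀ x q, Fσ x q = c q (σ q) + ∑ q', M q (σ q) q' * x q') →
        (Fσ (fun q => ⨆ k, F^[k] 0 q) = fun q => ⨆ k, F^[k] 0 q) ∧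
        ∀ q, (⨆ k, Fσ^[k] 0 q) = ⨆ k, F^[k] 0 q := by
  classical
  set x : T → ℝ≥0∞ := fun q => ⨆ k, F^[k] 0 q with hx
  -- F is monotone
  have hFmono : Monotone F := by
    intro u v huv q
    rw [hF, hF]
    refine Finset.le_inf' _ _ fun a ha => le_trans (Finset.inf'_le _ ha) ?_
    gcongr
    exact huv _
  -- the chain is monotone
  have hchain : ∀ q, Monotone fun k => F^[k] 0 q := by
    have : ∀ k, F^[k] 0 ≤ F^[k + 1] 0 := by
      intro k
      induction k with
      | zero => intro q; simp
      | succ k ih =>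
        rw [Function.iterate_succ_apply', Function.iterate_succ_apply']
        exact hFmono ih
    intro q
    exact monotone_nat_of_le_succ fun k => this k q
  have hle : ∀ k, F^[k] 0 ≤ x := fun k q => le_iSup (fun k => F^[k] 0 q) k
  -- x is a fixed point of F
  have hfix : ∀ q, F x q = x q := by
    intro q
    apply le_antisymm
    · rw [hF]
      have hrw : ∀ a, c q a + ∑ q', M q a q' * x q'
          = ⨆ k, (c q a + ∑ q', M q a q' * F^[k] 0 q') := by
        intro a
        have h1 : ∀ q', M q a q' * x q' = ⨆ k, M q a q' * F^[k] 0 q' := fun q' =>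
          ENNReal.mul_iSup (a := M q a q') (f := fun k => F^[k] 0 q')
        calc c q a + ∑ q', M q a q' * x q'
            = c q a + ∑ q', ⨆ k, M q a q' * F^[k] 0 q' := by
              simp_rw [h1]
          _ = c q a + ⨆ k, ∑ q', M q a q' * F^[k] 0 q' := by
              rw [ENNReal.finsetSum_iSup_of_monotone]
              intro q' i j hij
              exact mul_le_mul_right (hchain q' hij) _
          _ = ⨆ k, (c q a + ∑ q', M q a q' * F^[k] 0 q') :=
              ENNReal.add_iSup (f := fun k => ∑ q', M q a q' * F^[k] 0 q')
      calc (A q).inf' (hA q) (fun a => c q a + ∑ q', M q a q' * x q')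
          = (A q).inf' (hA q) (fun a => ⨆ k, (c q a + ∑ q', M q a q' * F^[k] 0 q')) := by
            apply Finset.inf'_congr _ rfl
            intro a _
            exact hrw a
        _ ≤ ⨆ k, (A q).inf' (hA q) (fun a => c q a + ∑ q', M q a q' * F^[k] 0 q') := by
            apply inf'_iSup_le_iSup_inf'
            intro a i j hij
            refine add_le_add_right (Finset.sum_le_sum fun q' _ => ?_) _
            exact mul_le_mul_right (hchain q' hij) _
        _ = ⨆ k, F (F^[k] 0) q := by
            apply iSup_congr
            intro k
            rw [hF]
        _ ≤ x q := by
            refine iSup_le fun k => ?_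
            rw [← Function.iterate_succ_apply' F k 0]
            exact le_iSup (fun k => F^[k] 0 q) (k + 1)
    · refine iSup_le fun k => ?_
      cases k with
      | zero => simp
      | succ k =>
        rw [Function.iterate_succ_apply']
        exact hFmono (hle k) q
  -- choose an optimal action for each q
  have hsel : ∀ q, ∃ a ∈ A q, (A q).inf' (hA q)
      (fun a => c q a + ∑ q', M q a q' * x q') = c q a + ∑ q', M q a q' * x q' :=
    fun q => (A q).exists_mem_eq_inf' (hA q) _
  choose σ hσA hσmin using hsel
  refine ⟨σ, hσA, fun Fσ hFσ => ?_⟩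
  have hFσx : ∀ q, Fσ x q = x q := by
    intro q
    rw [hFσ, ← hσmin, ← hF, hfix]
  have hFσfix : Fσ x = x := funext hFσx
  refine ⟨hFσfix, fun q => ?_⟩
  have hFσmono : Monotone Fσ := by
    intro u v huv q
    rw [hFσ, hFσ]
    gcongr
    exact huv _
  have hFleFσ : ∀ y, F y ≤ Fσ y := by
    intro y q
    rw [hF, hFσ]
    exact Finset.inf'_le _ (hσA q)
  apply le_antisymm
  · -- Fσ iterates are bounded by x
    have hb : ∀ k, Fσ^[k] 0 ≤ x := by
      intro k
      induction k with
      | zero => intro q; simp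
      | succ k ih =>
        rw [Function.iterate_succ_apply']
        calc Fσ (Fσ^[k] 0) ≤ Fσ x := hFσmono ih
          _ = x := hFσfix
    exact iSup_le fun k => hb k q
  · -- F iterates are below Fσ iterates
    have hb : ∀ k, F^[k] 0 ≤ Fσ^[k] 0 := by
      intro k
      induction k with
      | zero => exact le_refl _
      | succ k ih =>
        rw [Function.iterate_succ_apply', Function.iterate_succ_apply']
        calc F (F^[k] 0) ≤ F (Fσ^[k] 0) := hFmono ih
          _ ≤ Fσ (Fσ^[k] 0) := hFleFσ _
    exact iSup_le fun k => le_trans (hb k q) (le_iSup (fun k => Fσ^[k] 0 q) k)
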